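/- For λ in the cone Γ_{k-1} ⊂ ℝⁿ and any 0 ≤ ℓ ≤ k−2 and index i, one has σ_{ℓ-1}(λ|i)·σ_{k-1}(λ) − σ_ℓ(λ)·σ_{k-2}(λ|i) < 0 (with the convention σ_{-1} = 0, so the ℓ = 0 case reads −σ_{k-2}(λ|i) < 0). -/

import Mathlib

open Polynomial

/-- The m-th elementary symmetric polynomial of x ∈ ℝⁿ. -/
noncomputable def esymm (n m : ℕ) (x : Fin n → ℝ) : ℝ :=
  ∑ s ∈ Finset.powersetCard m (Finset.univ : Finset (Fin n)), ∏ i ∈ s, x i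

/-- The m-th elementary symmetric polynomial of x with the i-th coordinate deleted, σ_m(x|i). -/
noncomputable def esymmDel (n m : ℕ) (x : Fin n → ℝ) (i : Fin n) : ℝ :=
  ∑ s ∈ Finset.powersetCard m ((Finset.univ : Finset (Fin n)).erase i), ∏ j ∈ s, x j

/-- The Gårding cone Γ_k = {λ ∈ ℝⁿ : σ_j(λ) > 0 for 1 ≤ j ≤ k}. -/
def Gamma (n k : ℕ) : Set (Fin n → ℝ) :=
  {x | ∀ j : ℕ, 1 ≤ j → j ≤ k → 0 < esymm n j x}

lemma my_esymm_zero (s : Multiset ℝ) : s.esymm 0 = 1 := by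
  simp [Multiset.esymm]

lemma my_esymm_cons (a : ℝ) (s : Multiset ℝ) (j : ℕ) :
    (a ::ₘ s).esymm (j+1) = s.esymm (j+1) + a * s.esymm j := by
  simp [Multiset.esymm, Multiset.powersetCard_cons, Multiset.map_map, Function.comp,
    Multiset.sum_map_mul_left]

lemma my_esymm_eq_zero (s : Multiset ℝ) (j : ℕ) (h : Multiset.card s < j) : s.esymm j = 0 := by
  obtain ⟨i, hi, rfl⟩ : ∃ i, 0 < i ∧ j = Multiset.card s + i := ⟨j - Multiset.card s, by omega, by omega⟩
  simp [Multiset.esymm, Multiset.powersetCard_card_add s hi]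

lemma my_esymm_card (s : Multiset ℝ) : s.esymm (Multiset.card s) = s.prod := by
  induction s using Multiset.induction with
  | empty => simp [Multiset.esymm]
  | cons a s ih => simp [my_esymm_cons, ih, my_esymm_eq_zero s (Multiset.card s + 1) (by omega)]

lemma my_esymm_one (s : Multiset ℝ) : s.esymm 1 = s.sum := by
  induction s using Multiset.induction with
  | empty => rw [my_esymm_eq_zero _ 1 (by simp)]; simp
  | cons a s ih => simp [my_esymm_cons, ih, my_esymm_zero]; ring

lemma my_esymm_two (s : Multiset ℝ) : 2 * s.esymm 2 = s.sum^2 - (s.map (·^2)).sum := by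
  induction s using Multiset.induction with
  | empty => rw [my_esymm_eq_zero _ 2 (by simp)]; simp
  | cons a s ih =>
      simp only [my_esymm_cons, Multiset.sum_cons, Multiset.map_cons, my_esymm_one]
      ring_nf
      nlinarith [ih]

lemma my_cs (s : Multiset ℝ) : s.sum^2 ≤ (Multiset.card s : ℝ) * (s.map (·^2)).sum := by
  induction s using Multiset.induction with
  | empty => simp
  | cons a s ih =>
      have h1 : (0:ℝ) ≤ (Multiset.card s : ℝ) := by positivity
      have h2 : (0:ℝ) ≤ (s.map (·^2)).sum := by
        apply Multiset.sum_nonneg; intro t ht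
        obtain ⟨y, _, rfl⟩ := Multiset.mem_map.1 ht; positivity
      simp only [Multiset.sum_cons, Multiset.map_cons, Multiset.card_cons]
      push_cast
      obtain rfl | hne := eq_or_ne s 0
      · simp
      · have hc : (1:ℝ) ≤ (Multiset.card s : ℝ) := by
          have := Multiset.card_pos.2 hne; exact_mod_cast this
        nlinarith [sq_nonneg ((Multiset.card s : ℝ) * a - s.sum), ih,
          mul_le_mul_of_nonneg_left ih h1, hc, h2]

lemma my_esymm_inv (s : Multiset ℝ) (h0 : (0:ℝ) ∉ s) :
    ∀ j ≤ Multiset.card s, s.prod * ((s.map (·⁻¹)).esymm j) = s.esymm (Multiset.card s - j) := by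
  induction s using Multiset.induction with
  | empty =>
      intro j hj
      rw [Multiset.card_zero] at hj ⊢
      interval_cases j
      simp [my_esymm_zero]
  | cons a s ih =>
      intro j hj
      have ha : a ≠ 0 := fun h => h0 (by simp [h])
      have h0s : (0:ℝ) ∉ s := fun h => h0 (Multiset.mem_cons_of_mem h)
      rcases j with _ | j'
      · simp only [Nat.sub_zero, my_esymm_zero, mul_one]
        rw [my_esymm_card]
      · simp only [Multiset.map_cons, Multiset.prod_cons, Multiset.card_cons] at *
        rw [my_esymm_cons]
        have hj' : j' ≤ Multiset.card s := by omega
        rcases eq_or_lt_of_le hj' with heq | hlt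
        · -- j' = card s, top case
          have hz : (s.map (·⁻¹)).esymm (j' + 1) = 0 := by
            apply my_esymm_eq_zero; simp; omega
          have h1 := ih h0s j' hj'
          rw [heq, Nat.sub_self, my_esymm_zero] at h1
          have hidx : Multiset.card s + 1 - (j' + 1) = 0 := by omega
          rw [hz, hidx, my_esymm_zero]
          calc a * s.prod * (0 + a⁻¹ * (s.map (·⁻¹)).esymm j')
              = (a * a⁻¹) * (s.prod * (s.map (·⁻¹)).esymm j') := by ring
            _ = 1 := by rw [mul_inv_cancel₀ ha, heq, h1, mul_one]
        · -- j' + 1 ≤ card s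
          have h1 := ih h0s j' hj'
          have h2 := ih h0s (j'+1) (by omega)
          have hcs : Multiset.card s - j' = (Multiset.card s - (j'+1)) + 1 := by omega
          have hcs2 : Multiset.card s + 1 - (j' + 1) = Multiset.card s - j' := by omega
          rw [hcs2, hcs, my_esymm_cons, ← hcs]
          have expand : a * s.prod * ((s.map (·⁻¹)).esymm (j' + 1) + a⁻¹ * (s.map (·⁻¹)).esymm j')
              = a * (s.prod * (s.map (·⁻¹)).esymm (j' + 1)) + s.prod * (s.map (·⁻¹)).esymm j' := by
            field_simp
          rw [expand, h1, h2]
          ring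

lemma my_rolle (s : Multiset ℝ) (N : ℕ) (hs : Multiset.card s = N + 1) :
    ∃ t : Multiset ℝ, Multiset.card t = N ∧
      ∀ j ≤ N, ((N:ℝ)+1) * t.esymm j = (((N:ℝ)+1) - j) * s.esymm j := by
  classical
  set p : ℝ[X] := (s.map (fun a => X + C a)).prod with hp
  have hrw : s.map (fun a => X + C a) = (s.map Neg.neg).map (fun a => X - C a) := by
    rw [Multiset.map_map]; apply Multiset.map_congr rfl; intro a _; simp
  have hmonic : p.Monic := by
    apply monic_multiset_prod_of_monic; intro a _; exact monic_X_add_C a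
  have hdeg : p.natDegree = N + 1 := by
    rw [hp, hrw, natDegree_multiset_prod_X_sub_C_eq_card, Multiset.card_map, hs]
  have hroots : p.roots = s.map Neg.neg := by
    rw [hp, hrw, roots_multiset_prod_X_sub_C]
  have hcroots : Multiset.card p.roots = N + 1 := by rw [hroots, Multiset.card_map, hs]
  -- derivative
  have hd1 : (derivative p).coeff N = ((N:ℝ)+1) := by
    rw [coeff_derivative]
    have : p.coeff (N + 1) = 1 := by
      have := hmonic.leadingCoeff; rwa [Polynomial.leadingCoeff, hdeg] at this
    rw [this]; push_cast; ring
  have hdne : derivative p ≠ 0 := fun h => by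
    rw [h] at hd1; simp at hd1; exact Nat.cast_add_one_ne_zero N hd1.symm
  have hddeg : (derivative p).natDegree = N := by
    have h1 : (derivative p).natDegree ≤ N := by
      have := natDegree_derivative_le p; omega
    have h2 : N ≤ (derivative p).natDegree := by
      apply le_natDegree_of_ne_zero; rw [hd1]; positivity
    omega
  have hcard : Multiset.card (derivative p).roots = N := by
    have h1 := Polynomial.card_roots_le_derivative p
    have h2 := Polynomial.card_roots' (derivative p)
    omega
  have hsplits : (derivative p).Splits :=
    (splits_iff_card_roots).2 (by rw [hcard, hddeg])
  have hlead : (derivative p).leadingCoeff = ((N:ℝ)+1) := by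
    rw [Polynomial.leadingCoeff, hddeg, hd1]
  refine ⟨(derivative p).roots.map Neg.neg, by rw [Multiset.card_map, hcard], ?_⟩
  intro j hj
  set t := (derivative p).roots.map Neg.neg with ht
  have hq : derivative p = C ((N:ℝ)+1) * (t.map (fun a => X + C a)).prod := by
    have := hsplits.eq_prod_roots
    rw [hlead] at this
    rw [this, ht, Multiset.map_map]
    congr 1
    exact congrArg Multiset.prod
      (Multiset.map_congr rfl (fun a _ => by simp [Function.comp, C_neg, sub_eq_add_neg]))
  have hct : Multiset.card t = N := by rw [ht, Multiset.card_map, hcard]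
  -- coefficient at N - j
  have e1 : (derivative p).coeff (N - j) = ((N:ℝ)+1) * t.esymm j := by
    rw [hq, Polynomial.coeff_C_mul]
    rw [Multiset.prod_X_add_C_coeff t (by omega : N - j ≤ Multiset.card t)]
    congr 2
    omega
  have e2 : (derivative p).coeff (N - j) = s.esymm j * ((N:ℝ) + 1 - j) := by
    rw [coeff_derivative]
    have hnj : N - j + 1 ≤ Multiset.card s := by omega
    rw [hp, Multiset.prod_X_add_C_coeff s hnj]
    have : Multiset.card s - (N - j + 1) = j := by omega
    rw [this]
    congr 1
    have : (N : ℝ) + 1 - j = ((N - j : ℕ) : ℝ) + 1 := by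
      have : ((N - j : ℕ) : ℝ) = (N : ℝ) - j := by
        push_cast [Nat.cast_sub hj]; ring
      rw [this]; ring
    rw [this]
  rw [← e1, e2]; ring

lemma my_choose_lt (n m : ℕ) (hm : 1 ≤ m) (h : m + 1 ≤ n) :
    n.choose (m-1) * n.choose (m+1) < n.choose m ^ 2 := by
  obtain ⟨m', rfl⟩ : ∃ m', m = m' + 1 := ⟨m - 1, by omega⟩
  simp only [Nat.add_sub_cancel]
  have h1 : n.choose (m'+1) * (m'+1) = n.choose m' * (n - m') := Nat.choose_succ_right_eq n m'
  have h2 : n.choose (m'+2) * (m'+2) = n.choose (m'+1) * (n - (m'+1)) :=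
    Nat.choose_succ_right_eq n (m'+1)
  set A := n.choose m'
  set B := n.choose (m'+1)
  set D := n.choose (m'+2)
  have key : B^2 * ((m'+1) * (n - (m'+1))) = A * D * ((m'+2) * (n - m')) := by
    calc B^2 * ((m'+1) * (n - (m'+1))) = (B * (m'+1)) * (B * (n - (m'+1))) := by ring
      _ = (A * (n - m')) * (D * (m'+2)) := by rw [h1, ← h2]
      _ = A * D * ((m'+2) * (n - m')) := by ring
  have hlt : (m'+1) * (n - (m'+1)) < (m'+2) * (n - m') := by
    have h3 : n - m' = (n - (m'+1)) + 1 := by omega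
    rw [h3]
    set a := n - (m'+1)
    calc (m'+1) * a < (m'+1) * a + (a + m' + 2) := by omega
      _ = (m'+2) * (a+1) := by ring
  have hB : 0 < B^2 := by
    have := Nat.choose_pos (show m'+1 ≤ n by omega); positivity
  by_contra hcon
  push_neg at hcon
  have h4 : B^2 * ((m'+2) * (n - m')) ≤ A * D * ((m'+2) * (n - m')) :=
    Nat.mul_le_mul_right _ hcon
  rw [← key] at h4
  have h5 : B^2 * ((m'+1) * (n - (m'+1))) < B^2 * ((m'+2) * (n - m')) :=
    mul_lt_mul_of_pos_left hlt hB
  exact absurd (lt_of_le_of_lt h4 h5) (lt_irrefl _)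

lemma my_newton_norm : ∀ (n : ℕ) (s : Multiset ℝ), Multiset.card s = n → ∀ m : ℕ, 1 ≤ m → m + 1 ≤ n →
    s.esymm (m-1) / (n.choose (m-1) : ℝ) * (s.esymm (m+1) / (n.choose (m+1) : ℝ))
      ≤ (s.esymm m / (n.choose m : ℝ))^2 := by
  intro n
  induction n with
  | zero => intro s _ m _ h; omega
  | succ n ih =>
      intro s hs m hm hmn
      rcases lt_or_eq_of_le hmn with hlt | heq
      · -- m + 1 ≤ n : use Rolle + ih
        have hmn' : m + 1 ≤ n := by omega
        obtain ⟨t, hct, htj⟩ := my_rolle s n hs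
        have transfer : ∀ j ≤ n, t.esymm j / ((n.choose j : ℝ)) = s.esymm j / (((n+1).choose j : ℝ)) := by
          intro j hj
          have e1 : (n+1) * n.choose j = (n+1).choose (j+1) * (j+1) := Nat.add_one_mul_choose_eq n j
          have e2 : (n+1).choose (j+1) * (j+1) = (n+1).choose j * (n+1-j) :=
            Nat.choose_succ_right_eq (n+1) j
          have e3 : (n+1).choose j * (n+1-j) = (n+1) * n.choose j := by rw [← e2, ← e1]
          have hCj : ((n+1).choose j : ℝ) * ((n:ℝ)+1-j) = ((n:ℝ)+1) * (n.choose j : ℝ) := by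
            calc ((n+1).choose j : ℝ) * ((n:ℝ)+1-j)
                = (((n+1).choose j * (n+1-j) : ℕ) : ℝ) := by
                  push_cast [Nat.cast_sub (by omega : j ≤ n+1)]; ring
              _ = (((n+1) * n.choose j : ℕ) : ℝ) := by rw [e3]
              _ = ((n:ℝ)+1) * (n.choose j : ℝ) := by push_cast; ring
          have hc1 : ((n.choose j : ℝ)) ≠ 0 := by exact_mod_cast (Nat.choose_pos hj).ne'
          have hc2 : (((n+1).choose j : ℝ)) ≠ 0 := by
            exact_mod_cast (Nat.choose_pos (by omega : j ≤ n+1)).ne'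
          rw [div_eq_div_iff hc1 hc2]
          have h3 := htj j hj
          have hpos : ((n:ℝ)+1) ≠ 0 := by positivity
          apply mul_left_cancel₀ hpos
          calc ((n:ℝ)+1) * (t.esymm j * ((n+1).choose j : ℝ))
              = (((n:ℝ)+1) * t.esymm j) * ((n+1).choose j : ℝ) := by ring
            _ = (((n:ℝ)+1-j) * s.esymm j) * ((n+1).choose j : ℝ) := by rw [h3]
            _ = s.esymm j * (((n+1).choose j : ℝ) * ((n:ℝ)+1-j)) := by ring
            _ = s.esymm j * (((n:ℝ)+1) * (n.choose j : ℝ)) := by rw [hCj]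
            _ = ((n:ℝ)+1) * (s.esymm j * (n.choose j : ℝ)) := by ring
        rw [← transfer (m-1) (by omega), ← transfer m (by omega), ← transfer (m+1) (by omega)]
        exact ih t hct m hm hmn'
      · -- base case m = n
        obtain rfl : m = n := by omega
        have hprod : s.esymm (m+1) = s.prod := by
          rw [← hs, my_esymm_card]
        rcases eq_or_ne s.prod 0 with hP0 | hPne
        · rw [hprod, hP0]
          simp only [zero_div, mul_zero]
          positivity
        · have h0 : (0:ℝ) ∉ s := fun h => hPne (Multiset.prod_eq_zero h)
          set y : Multiset ℝ := s.map (·⁻¹) with hy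
          set P : ℝ := s.prod with hPdef
          set S : ℝ := y.sum with hS
          set Q : ℝ := (y.map (·^2)).sum with hQ
          have hcy : Multiset.card y = m + 1 := by rw [hy, Multiset.card_map, hs]
          have CS : S^2 ≤ ((m:ℝ)+1) * Q := by
            have := my_cs y
            rw [hcy] at this
            push_cast at this
            exact this
          have hy1 : P * y.esymm 1 = s.esymm m := by
            have := my_esymm_inv s h0 1 (by omega)
            rw [hs] at this
            simpa using this
          have hy2 : P * y.esymm 2 = s.esymm (m-1) := by
            have := my_esymm_inv s h0 2 (by omega)
            rw [hs] at this
            have hidx : m + 1 - 2 = m - 1 := by omega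
            rwa [hidx] at this
          have hE1 : s.esymm m = P * S := by rw [← hy1, my_esymm_one]
          have hE2 : s.esymm (m-1) = P * (S^2 - Q) / 2 := by
            have h2 := my_esymm_two y
            rw [← hy2]
            rw [show y.esymm 2 = (S^2 - Q)/2 by linarith]
            ring
          -- choose values
          have hC1 : ((m+1).choose (m+1) : ℝ) = 1 := by rw [Nat.choose_self]; norm_num
          have hC2 : ((m+1).choose m : ℝ) = (m:ℝ)+1 := by
            rw [Nat.choose_succ_self_right]; push_cast; ring
          have hC3 : ((m+1).choose (m-1) : ℝ) = ((m:ℝ)+1) * m / 2 := by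
            have hsymm : (m+1).choose (m-1) = (m+1).choose 2 := by
              rw [show m - 1 = m + 1 - 2 by omega, Nat.choose_symm (by omega)]
            rw [hsymm, Nat.cast_choose_two]
            push_cast; ring
          rw [hprod, hE1, hE2, hC1, hC2, hC3]
          have hm1 : (1:ℝ) ≤ (m:ℝ) := by exact_mod_cast hm
          rw [div_one, div_pow, div_mul_eq_mul_div, div_le_div_iff₀ (by positivity) (by positivity)]
          have lin : ((m:ℝ)+1)*(S^2 - Q) ≤ (m:ℝ)*S^2 := by nlinarith [CS]
          have hP2 : (0:ℝ) ≤ P^2 * ((m:ℝ)+1) := by positivity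
          nlinarith [mul_le_mul_of_nonneg_left lin hP2]

lemma my_newton_strict (s : Multiset ℝ) (m : ℕ) (hm : 1 ≤ m)
    (hpos : 0 < s.esymm (m-1) * s.esymm (m+1)) :
    s.esymm (m-1) * s.esymm (m+1) < s.esymm m ^ 2 := by
  have hmn : m + 1 ≤ Multiset.card s := by
    by_contra h
    rw [my_esymm_eq_zero s (m+1) (by omega)] at hpos
    simp at hpos
  set n := Multiset.card s with hn
  have hnorm := my_newton_norm n s rfl m hm hmn
  have hAD := my_choose_lt n m hm hmn
  set a := s.esymm (m-1)
  set b := s.esymm m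
  set d := s.esymm (m+1)
  set A := (n.choose (m-1) : ℝ) with hA
  set B := (n.choose m : ℝ) with hB
  set D := (n.choose (m+1) : ℝ) with hD
  have hApos : 0 < A := by rw [hA]; exact_mod_cast Nat.choose_pos (by omega)
  have hBpos : 0 < B := by rw [hB]; exact_mod_cast Nat.choose_pos (by omega)
  have hDpos : 0 < D := by rw [hD]; exact_mod_cast Nat.choose_pos (by omega)
  have hADB : A * D < B^2 := by
    rw [hA, hB, hD]
    exact_mod_cast hAD
  -- from hnorm : a/A * (d/D) ≤ (b/B)^2, get a*d*B^2 ≤ b^2*(A*D)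
  have hcross : a * d * B^2 ≤ b^2 * (A * D) := by
    have h1 : a/A * (d/D) = (a*d)/(A*D) := by field_simp
    have h2 : (b/B)^2 = b^2/B^2 := by rw [div_pow]
    rw [h1, h2, div_le_div_iff₀ (by positivity) (by positivity)] at hnorm
    linarith [hnorm]
  rcases eq_or_lt_of_le (sq_nonneg b) with hb0 | hb0
  · exfalso
    have : a * d * B^2 ≤ 0 := by rw [← hb0] at hcross; nlinarith [hcross]
    nlinarith [mul_pos hpos (pow_pos hBpos 2)]
  · have : b^2 * (A*D) < b^2 * B^2 := by
      exact mul_lt_mul_of_pos_left hADB hb0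
    have h3 : a * d * B^2 < b^2 * B^2 := lt_of_le_of_lt hcross this
    exact lt_of_mul_lt_mul_right h3 (by positivity)

lemma my_ratio_chain (s : Multiset ℝ) (K ℓ : ℕ) (h1 : 1 ≤ ℓ) (h2 : ℓ < K)
    (hpos : ∀ j ≤ K, 0 < s.esymm j) :
    s.esymm (ℓ-1) * s.esymm K < s.esymm ℓ * s.esymm (K-1) := by
  induction K, h2 using Nat.le_induction with
  | base =>
      have := my_newton_strict s ℓ h1
        (mul_pos (hpos (ℓ-1) (by omega)) (hpos (ℓ+1) (by omega)))
      have hidx : ℓ + 1 - 1 = ℓ := by omega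
      rw [hidx]
      nlinarith [this]
  | succ K hK ih =>
      have hpos' : ∀ j ≤ K, 0 < s.esymm j := fun j hj => hpos j (by omega)
      have IH := ih hpos'
      have NS := my_newton_strict s K (by omega)
        (mul_pos (hpos (K-1) (by omega)) (hpos (K+1) (by omega)))
      have hidx : K + 1 - 1 = K := by omega
      rw [hidx]
      have hA := hpos (ℓ-1) (by omega)
      have hB := hpos ℓ (by omega)
      have hC := hpos (K-1) (by omega)
      have hD := hpos K (by omega)
      have hE := hpos (K+1) (by omega)
      have f1 : s.esymm (ℓ-1) * (s.esymm (K-1) * s.esymm (K+1)) < s.esymm (ℓ-1) * s.esymm K ^ 2 :=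
        mul_lt_mul_of_pos_left NS hA
      have f2 : (s.esymm (ℓ-1) * s.esymm K) * s.esymm K < (s.esymm ℓ * s.esymm (K-1)) * s.esymm K :=
        mul_lt_mul_of_pos_right IH hD
      have hfin : (s.esymm (ℓ-1) * s.esymm (K+1)) * s.esymm (K-1)
          < (s.esymm ℓ * s.esymm K) * s.esymm (K-1) := by nlinarith [f1, f2]
      exact lt_of_mul_lt_mul_right hfin (le_of_lt hC)

lemma my_esymm_bridge (n m : ℕ) (x : Fin n → ℝ) :
    esymm n m x = ((Finset.univ : Finset (Fin n)).val.map x).esymm m := by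
  rw [Finset.esymm_map_val]
  rfl

lemma my_esymmDel_bridge (n m : ℕ) (x : Fin n → ℝ) (i : Fin n) :
    esymmDel n m x i = (((Finset.univ : Finset (Fin n)).erase i).val.map x).esymm m := by
  rw [Finset.esymm_map_val]
  rfl

lemma my_split (n m : ℕ) (hm : 1 ≤ m) (x : Fin n → ℝ) (i : Fin n) :
    esymm n m x = esymmDel n m x i + x i * esymmDel n (m-1) x i := by
  obtain ⟨m', rfl⟩ : ∃ m', m = m' + 1 := ⟨m - 1, by omega⟩
  rw [my_esymm_bridge, my_esymmDel_bridge, my_esymmDel_bridge]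
  have hval : (Finset.univ : Finset (Fin n)).val
      = i ::ₘ ((Finset.univ : Finset (Fin n)).erase i).val := by
    rw [Finset.erase_val]
    exact (Multiset.cons_erase (by simp : i ∈ (Finset.univ : Finset (Fin n)).val)).symm
  rw [hval, Multiset.map_cons, my_esymm_cons]
  simp

lemma my_gammaDel (n : ℕ) (K : ℕ) (hK : 1 ≤ K) (x : Fin n → ℝ) (hx : x ∈ Gamma n K) (i : Fin n) :
    ∀ j ≤ K - 1, 0 < (((Finset.univ : Finset (Fin n)).erase i).val.map x).esymm j := by
  induction K, hK using Nat.le_induction with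
  | base =>
      intro j hj
      have : j = 0 := by omega
      rw [this, my_esymm_zero]
      norm_num
  | succ K hK ih =>
      have hx' : x ∈ Gamma n K := fun j h1 h2 => hx j h1 (by omega)
      have IH := ih hx'
      set μ := (((Finset.univ : Finset (Fin n)).erase i).val.map x) with hμ
      have main : 0 < μ.esymm K := by
        by_contra hneg
        push_neg at hneg
        set a := x i with ha
        have hu : 0 < μ.esymm (K - 1) := IH (K-1) (by omega)
        have hσK : 0 < μ.esymm K + a * μ.esymm (K-1) := by
          have h := hx K hK (by omega)
          rwa [my_split n K hK x i, my_esymmDel_bridge, my_esymmDel_bridge] at h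
        have hσK1 : 0 < μ.esymm (K+1) + a * μ.esymm K := by
          have h := hx (K+1) (by omega) (le_refl _)
          rw [my_split n (K+1) (by omega) x i, my_esymmDel_bridge, my_esymmDel_bridge,
            Nat.add_sub_cancel] at h
          exact h
        have key : μ.esymm K ^ 2 < μ.esymm (K-1) * μ.esymm (K+1) := by
          nlinarith [mul_pos hu hσK1,
            mul_nonneg (neg_nonneg.2 hneg) (le_of_lt hσK)]
        have hposprod : 0 < μ.esymm (K-1) * μ.esymm (K+1) := by nlinarith [sq_nonneg (μ.esymm K)]
        have := my_newton_strict μ K (by omega) hposprod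
        nlinarith [this, key]
      intro j hj
      have hj' : j ≤ K := by omega
      rcases lt_or_eq_of_le hj' with hlt | heq
      · exact IH j (by omega)
      · rw [heq]; exact main

/-- for λ ∈ Γ_{k-1}, 0 ≤ ℓ ≤ k−2 and any index i,
σ_{ℓ-1}(λ|i)·σ_{k-1}(λ) − σ_ℓ(λ)·σ_{k-2}(λ|i) < 0, with the convention σ_{-1} = 0. -/
theorem stmt_5 (n k : ℕ) (hk : 2 ≤ k) (hkn : k ≤ n) (x : Fin n → ℝ)
    (hx : x ∈ Gamma n (k-1)) (ℓ : ℕ) (hl : ℓ ≤ k - 2) (i : Fin n) :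
    (if ℓ = 0 then (0:ℝ) else esymmDel n (ℓ-1) x i) * esymm n (k-1) x
      - esymm n ℓ x * esymmDel n (k-2) x i < 0 := by
  obtain ⟨K2, rfl⟩ : ∃ K2, k = K2 + 2 := ⟨k - 2, by omega⟩
  simp only [Nat.add_sub_cancel] at hl ⊢
  set μ := (((Finset.univ : Finset (Fin n)).erase i).val.map x) with hμ
  have hG : ∀ j ≤ K2, 0 < μ.esymm j := by
    have := my_gammaDel n (K2+1) (by omega) x hx i
    intro j hj; exact this j (by omega)
  have hidx1 : K2 + 2 - 1 = K2 + 1 := by omega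
  rw [hidx1]
  rcases Nat.eq_zero_or_pos ℓ with h0 | hpos
  · subst h0
    rw [if_pos rfl]
    have he0 : esymm n 0 x = 1 := by
      rw [my_esymm_bridge, my_esymm_zero]
    rw [he0, my_esymmDel_bridge]
    have := hG K2 (le_refl _)
    nlinarith [this]
  · obtain ⟨ℓ', rfl⟩ : ∃ ℓ', ℓ = ℓ' + 1 := ⟨ℓ - 1, by omega⟩
    rw [if_neg (by omega)]
    rw [my_split n (K2+1) (by omega) x i, my_split n (ℓ'+1) (by omega) x i]
    simp only [my_esymmDel_bridge, Nat.add_sub_cancel, ← hμ]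
    have expand : μ.esymm ℓ' * (μ.esymm (K2+1) + x i * μ.esymm K2)
        - (μ.esymm (ℓ'+1) + x i * μ.esymm ℓ') * μ.esymm K2
        = μ.esymm ℓ' * μ.esymm (K2+1) - μ.esymm (ℓ'+1) * μ.esymm K2 := by ring
    rw [expand]
    have hA : 0 < μ.esymm ℓ' := hG ℓ' (by omega)
    have hB : 0 < μ.esymm (ℓ'+1) := hG (ℓ'+1) hl
    have hC : 0 < μ.esymm K2 := hG K2 (le_refl _)
    rcases le_or_gt (μ.esymm (K2+1)) 0 with hcase | hcase
    · nlinarith [mul_pos hB hC, hA, hcase]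
    · have hall : ∀ j ≤ K2 + 1, 0 < μ.esymm j := by
        intro j hj
        rcases lt_or_eq_of_le hj with h | h
        · exact hG j (by omega)
        · rw [h]; exact hcase
      have chain := my_ratio_chain μ (K2+1) (ℓ'+1) (by omega) (by omega) hall
      simp only [Nat.add_sub_cancel] at chain
      linarith
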